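/- Let 0 ≤ t₀ < T, let λ₁, λ₂ : [t₀,T] → ℝ be continuous with λ₁(t) > 0, λ₂(t) > 0 and λ₁(t) + λ₂(t) = 1 for all t, and let U₁, U₂ : [t₀,T] → ℝ be continuous with U₁(t) < U₂(t) for all t. Fix j ∈ {1,2}. Suppose x : [t₀,T] → ℝ is continuous, x(t) ∉ {U₁(t), U₂(t)} for every t ∈ [t₀,T), x is differentiable on [t₀,T) with x'(t) = 2·λ₁(t)/(x(t) − U₁(t)) + 2·λ₂(t)/(x(t) − U₂(t)) for all t ∈ [t₀,T), and x(T) = U_j(T). Then limsup_{h↓0} |U_j(T) − U_j(T−h)|/√h ≥ 4·√(λ_j(T)). -/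

import Mathlib

open Filter Set Real

noncomputable section

set_option maxHeartbeats 1000000

lemma aux_pos_of_ne (f : ℝ → ℝ) (A B : ℝ) (hAB : A ≤ B)
    (hf : ContinuousOn f (Set.Icc A B)) (hne : ∀ t ∈ Set.Icc A B, f t ≠ 0)
    (hA : 0 < f A) : 0 < f B := by
  rcases (hne B ⟨hAB, le_rfl⟩).lt_or_gt with h | h
  · exfalso
    have h0 : (0:ℝ) ∈ Set.Icc (f B) (f A) := ⟨h.le, hA.le⟩
    obtain ⟨s, hs, hs0⟩ := intermediate_value_Icc' hAB hf h0
    exact hne s hs hs0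
  · exact h

lemma aux_eventually_Icc {t₀ T : ℝ} (htT : t₀ < T) {P : ℝ → Prop}
    (h : ∀ᶠ t in nhdsWithin T (Set.Icc t₀ T), P t) :
    ∃ a, t₀ < a ∧ a < T ∧ ∀ t ∈ Set.Icc a T, P t := by
  rw [Filter.Eventually, Metric.mem_nhdsWithin_iff] at h
  obtain ⟨ε, hε, hsub⟩ := h
  refine ⟨max ((t₀ + T) / 2) (T - ε / 2), lt_max_of_lt_left (by linarith), ?_, ?_⟩
  · exact max_lt (by linarith) (by linarith)
  · intro t ht
    have ht1 : (t₀ + T) / 2 ≤ t := le_trans (le_max_left _ _) ht.1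
    have ht2 : T - ε / 2 ≤ t := le_trans (le_max_right _ _) ht.1
    apply hsub
    constructor
    · rw [Metric.mem_ball, Real.dist_eq, abs_lt]
      constructor <;> [linarith [ht.2]; linarith [ht.2]]
    · exact ⟨by linarith, ht.2⟩

lemma aux_eventually_lt {t₀ T r : ℝ} (htT : t₀ < T) {f : ℝ → ℝ}
    (hf : ContinuousOn f (Set.Icc t₀ T)) (hr : f T < r) :
    ∃ a, t₀ < a ∧ a < T ∧ ∀ t ∈ Set.Icc a T, f t < r := by
  apply aux_eventually_Icc htT
  exact (hf T ⟨le_of_lt htT, le_rfl⟩).eventually_lt_const hr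

lemma aux_endgame (a T c lam' M : ℝ) (haT : a < T) (hc : 0 < c)
    (hlam' : 0 < lam') (hM : 0 < M) (hcl : c ^ 2 < 16 * lam')
    (y w : ℝ → ℝ)
    (hyc : ContinuousOn y (Set.Icc a T))
    (hyT : y T = w T)
    (hdpos : ∀ t ∈ Set.Ico a T, 0 < y t - w t)
    (hdy : ∀ t ∈ Set.Ioo a T, ∃ D, HasDerivAt y D t ∧ 2 * lam' / (y t - w t) - M ≤ D ∧ 0 < D)
    (hw : ∀ h ∈ Set.Ioc 0 (T - a), |w T - w (T - h)| ≤ c * Real.sqrt h) : False := by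
  -- strict monotonicity of y
  have hmono : StrictMonoOn y (Set.Icc a T) := by
    apply strictMonoOn_of_deriv_pos (convex_Icc a T) hyc
    intro t ht
    rw [interior_Icc] at ht
    obtain ⟨D, hD, _, hDpos⟩ := hdy t ht
    rwa [hD.deriv]
  set z : ℝ → ℝ := fun h => y (T - h) - w T with hzdef
  have hz_neg : ∀ h ∈ Set.Ioc 0 (T - a), z h < 0 := by
    intro h hh
    have h1 : T - h ∈ Set.Icc a T := ⟨by linarith [hh.2], by linarith [hh.1]⟩
    have h2 : y (T - h) < y T := hmono h1 ⟨haT.le, le_rfl⟩ (by linarith [hh.1])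
    simp only [hzdef]
    rw [hyT] at h2
    linarith
  have hG2 : ∀ h ∈ Set.Ioc 0 (T - a), y (T - h) - w (T - h) ≤ z h + c * Real.sqrt h := by
    intro h hh
    have := hw h hh
    have h2 : w T - w (T - h) ≤ |w T - w (T - h)| := le_abs_self _
    simp only [hzdef]
    linarith
  set γ : ℝ := 4 * lam' - c ^ 2 / 4 with hγdef
  have hγpos : 0 < γ := by simp only [hγdef]; nlinarith
  set ε : ℝ := γ / (2 * c) with hεdef
  have hεpos : 0 < ε := div_pos hγpos (by linarith)
  set P : ℝ → Prop := fun b =>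
    ∃ hb, 0 < hb ∧ hb ≤ T - a ∧ ∀ h ∈ Set.Ioc 0 hb, z h ≤ -b * Real.sqrt h with hPdef
  have hfalse : ∀ b, c ≤ b → P b → False := by
    intro b hcb ⟨hb, hbpos, hble, hbz⟩
    have hmem : hb ∈ Set.Ioc 0 hb := ⟨hbpos, le_rfl⟩
    have hmem' : hb ∈ Set.Ioc 0 (T - a) := ⟨hbpos, hble⟩
    have hd := hdpos (T - hb) ⟨by linarith, by linarith⟩
    have h1 := hG2 hb hmem'
    have h2 := hbz hb hmem
    have hsq : 0 < Real.sqrt hb := Real.sqrt_pos.mpr hbpos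
    nlinarith
  have base : P 0 := by
    refine ⟨T - a, by linarith, le_rfl, fun h hh => ?_⟩
    have := hz_neg h hh
    simp only [neg_zero, zero_mul]
    linarith
  have step : ∀ b, 0 ≤ b → b < c → P b →
      P (4 * lam' / (c - b) - ε) ∧ b + ε ≤ 4 * lam' / (c - b) - ε := by
    intro b hb0 hbc ⟨hb, hbpos, hble, hbz⟩
    have hcb : 0 < c - b := by linarith
    set k : ℝ := 4 * lam' / (c - b) with hkdef
    have hkpos : 0 < k := div_pos (by linarith) hcb
    set hb' : ℝ := min hb ((ε / M) ^ 2) with hb'def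
    have hb'pos : 0 < hb' := lt_min hbpos (by positivity)
    have hb'le : hb' ≤ hb := min_le_left _ _
    have hb'le2 : hb' ≤ T - a := hb'le.trans hble
    set G : ℝ → ℝ := fun h => -k * Real.sqrt h + M * h with hGdef
    -- derivative comparison on (0, hb')
    have hder : ∀ h ∈ Set.Ioo 0 hb',
        ∃ v, HasDerivAt (fun h => z h - G h) v h ∧ v ≤ 0 := by
      intro h hh
      have hh0 : (0:ℝ) < h := hh.1
      have hhb : h < hb' := hh.2
      have hTh : T - h ∈ Set.Ioo a T := ⟨by linarith [hhb.trans_le hb'le2], by linarith⟩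
      obtain ⟨D, hD, hDlow, _⟩ := hdy (T - h) hTh
      have hinner : HasDerivAt (fun u : ℝ => T - u) (-1) h := by
        simpa using (hasDerivAt_id h).const_sub T
      have hz' : HasDerivAt z (D * (-1)) h := (hD.comp h hinner).sub_const (w T)
      have hsq : 0 < Real.sqrt h := Real.sqrt_pos.mpr hh0
      have hG' : HasDerivAt G (-k * (1 / (2 * Real.sqrt h)) + M * 1) h := by
        exact ((Real.hasDerivAt_sqrt hh0.ne').const_mul (-k)).add ((hasDerivAt_id h).const_mul M)
      refine ⟨_, hz'.sub hG', ?_⟩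
      -- bound: D ≥ 2 lam'/d - M and d ≤ (c-b)√h
      have hdTh : 0 < y (T - h) - w (T - h) := hdpos (T - h) ⟨hTh.1.le, hTh.2⟩
      have hzh := hbz h ⟨hh0, (hhb.le.trans hb'le)⟩
      have hdle : y (T - h) - w (T - h) ≤ (c - b) * Real.sqrt h := by
        have := hG2 h ⟨hh0, hhb.le.trans hb'le2⟩
        nlinarith
      have hdiv : 2 * lam' / ((c - b) * Real.sqrt h) ≤ 2 * lam' / (y (T - h) - w (T - h)) :=
        div_le_div_of_nonneg_left (by linarith) hdTh hdle
      have heq : k * (1 / (2 * Real.sqrt h)) = 2 * lam' / ((c - b) * Real.sqrt h) := by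
        rw [hkdef]
        field_simp
        ring
      have : k * (1 / (2 * Real.sqrt h)) - M ≤ D := by
        rw [heq]; linarith
      nlinarith [this]
    have hanti : AntitoneOn (fun h => z h - G h) (Set.Icc 0 hb') := by
      apply antitoneOn_of_deriv_nonpos (convex_Icc _ _)
      · apply ContinuousOn.sub
        · apply ContinuousOn.sub _ continuousOn_const
          apply hyc.comp (continuousOn_const.sub continuousOn_id)
          intro u hu
          exact ⟨by simp; linarith [hu.2, hb'le2], by simp; linarith [hu.1]⟩
        · exact ((continuousOn_const.mul
            Real.continuous_sqrt.continuousOn).add (continuousOn_const.mul continuousOn_id))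
      · intro u hu
        rw [interior_Icc] at hu
        exact ((hder u hu).choose_spec.1.differentiableAt).differentiableWithinAt
      · intro u hu
        rw [interior_Icc] at hu
        obtain ⟨v, hv, hv0⟩ := (hder u hu)
        rw [hv.deriv]
        exact hv0
    have hcmp : ∀ h ∈ Set.Ioc 0 hb', z h ≤ G h := by
      intro h hh
      have h0m : (0:ℝ) ∈ Set.Icc 0 hb' := ⟨le_rfl, hb'pos.le⟩
      have hm : h ∈ Set.Icc 0 hb' := ⟨hh.1.le, hh.2⟩
      have h2 := hanti h0m hm hh.1.le
      simp only at h2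
      have hz0 : z 0 = 0 := by simp [hzdef, hyT]
      have hG0 : G 0 = 0 := by simp [hGdef]
      rw [hz0, hG0] at h2
      linarith
    constructor
    · refine ⟨hb', hb'pos, hb'le2, fun h hh => ?_⟩
      have h1 := hcmp h hh
      have hsqle : Real.sqrt h ≤ ε / M := by
        have : h ≤ (ε / M) ^ 2 := hh.2.trans (min_le_right _ _)
        calc Real.sqrt h ≤ Real.sqrt ((ε / M) ^ 2) := Real.sqrt_le_sqrt this
          _ = ε / M := Real.sqrt_sq (by positivity)
      have hMh : M * h ≤ ε * Real.sqrt h := by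
        have hss : Real.sqrt h * Real.sqrt h = h := Real.mul_self_sqrt hh.1.le
        calc M * h = M * (Real.sqrt h * Real.sqrt h) := by rw [hss]
          _ ≤ M * ((ε / M) * Real.sqrt h) := by
              apply mul_le_mul_of_nonneg_left _ hM.le
              exact mul_le_mul_of_nonneg_right hsqle (Real.sqrt_nonneg _)
          _ = ε * Real.sqrt h := by field_simp
      have hGle : G h ≤ -(k - ε) * Real.sqrt h := by
        have : -k * Real.sqrt h + M * h ≤ -(k - ε) * Real.sqrt h := by nlinarith [hMh]
        exact this
      calc z h ≤ G h := h1
        _ ≤ -(k - ε) * Real.sqrt h := hGle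
        _ = -(4 * lam' / (c - b) - ε) * Real.sqrt h := by rw [hkdef]
    · -- increment bound
      have hnum : γ ≤ b ^ 2 - c * b + 4 * lam' := by rw [hγdef]; nlinarith [sq_nonneg (b - c / 2)]
      have hdd : γ / c ≤ (b ^ 2 - c * b + 4 * lam') / (c - b) :=
        div_le_div₀ (by nlinarith) hnum hcb (by linarith)
      have heq2 : (b ^ 2 - c * b + 4 * lam') / (c - b) = 4 * lam' / (c - b) - b := by
        field_simp
        ring
      have h2ε : γ / c = 2 * ε := by rw [hεdef]; field_simp
      rw [heq2, h2ε] at hdd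
      linarith
  have hiter : ∀ n : ℕ, ∃ b, 0 ≤ b ∧ (n : ℝ) * ε ≤ b ∧ P b := by
    intro n
    induction n with
    | zero => exact ⟨0, le_rfl, by simp, base⟩
    | succ n ih =>
      obtain ⟨b, hb0, hbn, hPb⟩ := ih
      by_cases hbc : b < c
      · obtain ⟨hP', hinc⟩ := step b hb0 hbc hPb
        refine ⟨4 * lam' / (c - b) - ε, by linarith, ?_, hP'⟩
        push_cast
        nlinarith
      · exact absurd (hfalse b (not_lt.1 hbc) hPb) (not_false)
  obtain ⟨b, _, hbn, hPb⟩ := hiter ⌈c / ε⌉₊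
  refine hfalse b ?_ hPb
  have h1 : c / ε ≤ (⌈c / ε⌉₊ : ℝ) := Nat.le_ceil _
  have h2 : (c / ε) * ε ≤ (⌈c / ε⌉₊ : ℝ) * ε := mul_le_mul_of_nonneg_right h1 hεpos.le
  rw [div_mul_cancel₀ _ hεpos.ne'] at h2
  linarith

lemma two_slit_core (t₀ T : ℝ) (htT : t₀ < T)
    (l₁ l₂ U₁ U₂ : ℝ → ℝ)
    (hl₁c : ContinuousOn l₁ (Set.Icc t₀ T))
    (hU₁c : ContinuousOn U₁ (Set.Icc t₀ T)) (hU₂c : ContinuousOn U₂ (Set.Icc t₀ T))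
    (hl₁ : ∀ t ∈ Set.Icc t₀ T, 0 < l₁ t) (hl₂ : ∀ t ∈ Set.Icc t₀ T, 0 < l₂ t)
    (hsum : ∀ t ∈ Set.Icc t₀ T, l₁ t + l₂ t = 1)
    (hU : ∀ t ∈ Set.Icc t₀ T, U₁ t < U₂ t)
    (x : ℝ → ℝ) (hxc : ContinuousOn x (Set.Icc t₀ T))
    (hxne : ∀ t ∈ Set.Ico t₀ T, x t ≠ U₁ t ∧ x t ≠ U₂ t)
    (hode : ∀ t ∈ Set.Ico t₀ T,
      HasDerivWithinAt x (2 * l₁ t / (x t - U₁ t) + 2 * l₂ t / (x t - U₂ t))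
        (Set.Icc t₀ T) t)
    (hxT : x T = U₁ T) :
    ((4 * Real.sqrt (l₁ T) : ℝ) : EReal) ≤
      Filter.limsup (fun h : ℝ => ((|U₁ T - U₁ (T - h)| / Real.sqrt h : ℝ) : EReal))
        (nhdsWithin 0 (Set.Ioi 0)) := by
  by_contra hcon
  push_neg at hcon
  obtain ⟨c, hc1, hc2⟩ := EReal.lt_iff_exists_real_btwn.mp hcon
  rw [EReal.coe_lt_coe_iff] at hc2
  have hev := Filter.eventually_lt_of_limsup_lt hc1
  rw [Filter.Eventually, Metric.mem_nhdsWithin_iff] at hev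
  obtain ⟨ε₀, hε₀, hsub⟩ := hev
  have hstrict : ∀ h : ℝ, 0 < h → h < ε₀ → |U₁ T - U₁ (T - h)| / Real.sqrt h < c := by
    intro h h0 hε
    have hmem : h ∈ Metric.ball (0:ℝ) ε₀ ∩ Set.Ioi 0 :=
      ⟨by simpa [Real.dist_eq, abs_of_pos h0] using hε, h0⟩
    have := hsub hmem
    simpa only [Set.mem_setOf_eq, EReal.coe_lt_coe_iff] using this
  have hc0 : 0 < c := by
    have h0 : (0:ℝ) < min (ε₀ / 2) 1 := lt_min (by linarith) one_pos
    have h1 := hstrict _ h0 (lt_of_le_of_lt (min_le_left _ _) (by linarith))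
    have h2 : 0 ≤ |U₁ T - U₁ (T - min (ε₀ / 2) 1)| / Real.sqrt (min (ε₀ / 2) 1) :=
      div_nonneg (abs_nonneg _) (Real.sqrt_nonneg _)
    linarith
  have hUbd : ∀ h : ℝ, 0 < h → h < ε₀ → |U₁ T - U₁ (T - h)| ≤ c * Real.sqrt h := by
    intro h h0 hε
    have := hstrict h h0 hε
    have hsq : 0 < Real.sqrt h := Real.sqrt_pos.mpr h0
    rw [div_lt_iff₀ hsq] at this
    linarith
  have hTmem : T ∈ Set.Icc t₀ T := ⟨htT.le, le_rfl⟩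
  have hlamT : 0 < l₁ T := hl₁ T hTmem
  have hcsq : c ^ 2 < 16 * l₁ T := by
    have h1 : c * c < (4 * Real.sqrt (l₁ T)) * (4 * Real.sqrt (l₁ T)) :=
      mul_self_lt_mul_self hc0.le hc2
    have h2 : Real.sqrt (l₁ T) * Real.sqrt (l₁ T) = l₁ T := Real.mul_self_sqrt hlamT.le
    nlinarith
  set lam' : ℝ := (c ^ 2 / 16 + l₁ T) / 2 with hlam'def
  have hlam'pos : 0 < lam' := by positivity
  have hlam'lt : lam' < l₁ T := by rw [hlam'def]; nlinarith
  have hcl : c ^ 2 < 16 * lam' := by rw [hlam'def]; nlinarith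
  -- interval where x < U₂
  obtain ⟨a₁, ha₁0, ha₁T, ha₁⟩ := aux_eventually_lt (r := 0) htT (hxc.sub hU₂c)
    (by simp only [Pi.sub_apply, hxT]; linarith [hU T hTmem])
  -- interval where l₁ > lam'
  obtain ⟨a₂, ha₂0, ha₂T, ha₂⟩ := aux_eventually_lt (r := 0) (f := fun t => lam' - l₁ t) htT
    (continuousOn_const.sub hl₁c) (by show lam' - l₁ T < 0; linarith)
  set a₁₂ : ℝ := max a₁ a₂ with ha₁₂def
  have ha₁₂0 : t₀ < a₁₂ := lt_max_of_lt_left ha₁0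
  have ha₁₂T : a₁₂ < T := max_lt ha₁T ha₂T
  -- minimum of U₂ - x on [a₁₂, T]
  obtain ⟨tm, htm, hmin⟩ := (isCompact_Icc (a := a₁₂) (b := T)).exists_isMinOn
    (Set.nonempty_Icc.mpr ha₁₂T.le)
    ((hU₂c.sub hxc).mono (Set.Icc_subset_Icc ha₁₂0.le le_rfl))
  set m : ℝ := U₂ tm - x tm with hmdef
  have hmpos : 0 < m := by
    have h1 : x tm - U₂ tm < 0 := ha₁ tm ⟨le_trans (le_max_left _ _) htm.1, htm.2⟩
    simp only [hmdef]
    linarith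
  set M : ℝ := 2 / m with hMdef
  have hMpos : 0 < M := by positivity
  have hm_le : ∀ t ∈ Set.Icc a₁₂ T, m ≤ U₂ t - x t := fun t ht => hmin ht
  -- interval where |x - U₁| < lam'/M
  obtain ⟨a₃, ha₃0, ha₃T, ha₃⟩ := aux_eventually_lt (r := lam' / M) htT
    ((hxc.sub hU₁c).abs) (by simp [hxT]; positivity)
  set A : ℝ := max (max a₁₂ a₃) (T - ε₀ / 2) with hAdef
  have hA0 : t₀ < A := lt_max_of_lt_left (lt_max_of_lt_left ha₁₂0)
  have hAT : A < T := max_lt (max_lt ha₁₂T ha₃T) (by linarith)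
  have hAa₁₂ : a₁₂ ≤ A := le_trans (le_max_left _ _) (le_max_left _ _)
  have hAa₃ : a₃ ≤ A := le_trans (le_max_right _ _) (le_max_left _ _)
  have hAε : T - A ≤ ε₀ / 2 := by
    have := le_max_right (max a₁₂ a₃) (T - ε₀ / 2)
    simp only [hAdef]
    linarith [this]
  have hAIcc : Set.Icc A T ⊆ Set.Icc t₀ T := Set.Icc_subset_Icc hA0.le le_rfl
  -- facts on [A,T]
  have hl₁A : ∀ t ∈ Set.Icc A T, lam' < l₁ t := by
    intro t ht
    have h5 := ha₂ t ⟨le_trans (le_trans (le_max_right a₁ a₂) hAa₁₂) ht.1, ht.2⟩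
    linarith
  have habs : ∀ t ∈ Set.Icc A T, |x t - U₁ t| < lam' / M := fun t ht =>
    ha₃ t ⟨le_trans hAa₃ ht.1, ht.2⟩
  have hmA : ∀ t ∈ Set.Icc A T, m ≤ U₂ t - x t := fun t ht =>
    hm_le t ⟨le_trans hAa₁₂ ht.1, ht.2⟩
  have hl₂le : ∀ t ∈ Set.Icc t₀ T, l₂ t ≤ 1 := by
    intro t ht
    have := hsum t ht
    have := hl₁ t ht
    linarith
  have hterm₂ : ∀ t ∈ Set.Icc A T, 2 * l₂ t / (U₂ t - x t) ≤ M := by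
    intro t ht
    have h1 : 2 * l₂ t ≤ 2 := by linarith [hl₂le t (hAIcc ht)]
    have h2 := hmA t ht
    rw [hMdef]
    exact div_le_div₀ (by norm_num) h1 hmpos h2
  -- derivative facts
  have hderiv : ∀ t ∈ Set.Ioo A T,
      HasDerivAt x (2 * l₁ t / (x t - U₁ t) + 2 * l₂ t / (x t - U₂ t)) t := by
    intro t ht
    have ht' : t ∈ Set.Ico t₀ T := ⟨le_of_lt (lt_of_le_of_lt hA0.le ht.1), ht.2⟩
    exact (hode t ht').hasDerivAt (Icc_mem_nhds (lt_of_le_of_lt hA0.le ht.1) ht.2)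
  have hUbdA : ∀ h ∈ Set.Ioc 0 (T - A), |U₁ T - U₁ (T - h)| ≤ c * Real.sqrt h := by
    intro h hh
    exact hUbd h hh.1 (by linarith [hh.2, hAε, hε₀])
  -- the two sign cases
  have hxneA : x A ≠ U₁ A := (hxne A ⟨hA0.le, hAT⟩).1
  have hsgn : (∀ t ∈ Set.Ico A T, 0 < x t - U₁ t) ∨ (∀ t ∈ Set.Ico A T, 0 < U₁ t - x t) := by
    rcases hxneA.lt_or_gt with hcase | hcase
    · right
      intro t ht
      exact aux_pos_of_ne (fun s => U₁ s - x s) A t ht.1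
        ((hU₁c.sub hxc).mono (fun s hs => hAIcc ⟨hs.1, le_trans hs.2 ht.2.le⟩))
        (fun s hs => sub_ne_zero.mpr (Ne.symm
          (hxne s ⟨le_trans hA0.le hs.1, lt_of_le_of_lt hs.2 ht.2⟩).1))
        (show (0:ℝ) < U₁ A - x A by linarith)
    · left
      intro t ht
      exact aux_pos_of_ne (fun s => x s - U₁ s) A t ht.1
        ((hxc.sub hU₁c).mono (fun s hs => hAIcc ⟨hs.1, le_trans hs.2 ht.2.le⟩))
        (fun s hs => sub_ne_zero.mpr
          (hxne s ⟨le_trans hA0.le hs.1, lt_of_le_of_lt hs.2 ht.2⟩).1)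
        (show (0:ℝ) < x A - U₁ A by linarith)
  rcases hsgn with hsgn | hsgn
  · -- case x > U₁ on [A,T)
    refine aux_endgame A T c lam' M hAT hc0 hlam'pos hMpos hcl x U₁
      (hxc.mono hAIcc) hxT (fun t ht => hsgn t ht) ?_ hUbdA
    intro t ht
    have htIcc : t ∈ Set.Icc A T := ⟨ht.1.le, ht.2.le⟩
    have htIco : t ∈ Set.Ico A T := ⟨ht.1.le, ht.2⟩
    have hd : 0 < x t - U₁ t := hsgn t htIco
    refine ⟨_, hderiv t ht, ?_, ?_⟩
    · have h1 : 2 * lam' / (x t - U₁ t) ≤ 2 * l₁ t / (x t - U₁ t) :=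
        (div_le_div_iff_of_pos_right hd).mpr (by linarith [hl₁A t htIcc])
      have h2 : 2 * l₂ t / (x t - U₂ t) = -(2 * l₂ t / (U₂ t - x t)) := by
        rw [show x t - U₂ t = -(U₂ t - x t) by ring, div_neg]
      have h3 := hterm₂ t htIcc
      rw [h2]
      linarith
    · -- positivity of the derivative
      have habs' : x t - U₁ t < lam' / M := by
        have := habs t htIcc
        rw [abs_of_pos hd] at this
        exact this
      have hMd : M * (x t - U₁ t) < lam' := by
        rw [← lt_div_iff₀' hMpos]
        exact habs'
      have h4 : M < 2 * lam' / (x t - U₁ t) := by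
        rw [lt_div_iff₀ hd]
        nlinarith
      have h1 : 2 * lam' / (x t - U₁ t) ≤ 2 * l₁ t / (x t - U₁ t) :=
        (div_le_div_iff_of_pos_right hd).mpr (by linarith [hl₁A t htIcc])
      have h2 : 2 * l₂ t / (x t - U₂ t) = -(2 * l₂ t / (U₂ t - x t)) := by
        rw [show x t - U₂ t = -(U₂ t - x t) by ring, div_neg]
      have h3 := hterm₂ t htIcc
      rw [h2]
      linarith
  · -- case x < U₁ on [A,T)
    refine aux_endgame A T c lam' M hAT hc0 hlam'pos hMpos hcl
      (fun t => -x t) (fun t => -U₁ t)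
      ((hxc.mono hAIcc).neg) (by simp [hxT]) (fun t ht => by
        have := hsgn t ht; show 0 < -x t - -U₁ t; linarith) ?_ ?_
    · intro t ht
      have htIcc : t ∈ Set.Icc A T := ⟨ht.1.le, ht.2.le⟩
      have htIco : t ∈ Set.Ico A T := ⟨ht.1.le, ht.2⟩
      have hd : 0 < U₁ t - x t := hsgn t htIco
      have hU₂x : 0 < U₂ t - x t := by
        have := hU t (hAIcc htIcc)
        linarith
      refine ⟨_, (hderiv t ht).neg, ?_, ?_⟩
      · have heq : -(2 * l₁ t / (x t - U₁ t) + 2 * l₂ t / (x t - U₂ t))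
            = 2 * l₁ t / (U₁ t - x t) + 2 * l₂ t / (U₂ t - x t) := by
          rw [show x t - U₁ t = -(U₁ t - x t) by ring,
            show x t - U₂ t = -(U₂ t - x t) by ring, div_neg, div_neg]
          ring
        rw [heq]
        have h1 : 2 * lam' / (U₁ t - x t) ≤ 2 * l₁ t / (U₁ t - x t) :=
          (div_le_div_iff_of_pos_right hd).mpr (by linarith [hl₁A t htIcc])
        have h2 : 0 ≤ 2 * l₂ t / (U₂ t - x t) :=
          div_nonneg (by linarith [hl₂ t (hAIcc htIcc)]) hU₂x.le
        have : 2 * lam' / ((fun t => -x t) t - (fun t => -U₁ t) t)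
            = 2 * lam' / (U₁ t - x t) := by
          simp only
          rw [show -x t - -U₁ t = U₁ t - x t by ring]
        rw [this]
        linarith
      · have habs' : U₁ t - x t < lam' / M := by
          have := habs t htIcc
          rw [abs_sub_comm, abs_of_pos hd] at this
          exact this
        have hMd : M * (U₁ t - x t) < lam' := by
          rw [← lt_div_iff₀' hMpos]
          exact habs'
        have h4 : M < 2 * lam' / (U₁ t - x t) := by
          rw [lt_div_iff₀ hd]
          nlinarith
        have heq : -(2 * l₁ t / (x t - U₁ t) + 2 * l₂ t / (x t - U₂ t))
            = 2 * l₁ t / (U₁ t - x t) + 2 * l₂ t / (U₂ t - x t) := by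
          rw [show x t - U₁ t = -(U₁ t - x t) by ring,
            show x t - U₂ t = -(U₂ t - x t) by ring, div_neg, div_neg]
          ring
        rw [heq]
        have h1 : 2 * lam' / (U₁ t - x t) ≤ 2 * l₁ t / (U₁ t - x t) :=
          (div_le_div_iff_of_pos_right hd).mpr (by linarith [hl₁A t htIcc])
        have h2 : 0 ≤ 2 * l₂ t / (U₂ t - x t) :=
          div_nonneg (by linarith [hl₂ t (hAIcc htIcc)]) hU₂x.le
        linarith
    · intro h hh
      have heq : (fun t => -U₁ t) T - (fun t => -U₁ t) (T - h) = -(U₁ T - U₁ (T - h)) := by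
        simp only; ring
      rw [heq, abs_neg]
      exact hUbdA h hh


/-- If a real solution x of the chordal two-slit Loewner ODE
x' = 2λ₁/(x − U₁) + 2λ₂/(x − U₂) on [t₀,T), started off the singularities,
hits the driving function U_j exactly at time T, then
limsup_{h↓0} |U_j(T) − U_j(T−h)|/√h ≥ 4·√(λ_j(T)). -/
theorem two_slit_hitting_implies_large_limsup (t₀ T : ℝ)
    (ht₀ : 0 ≤ t₀) (htT : t₀ < T)
    (l₁ l₂ U₁ U₂ : ℝ → ℝ)
    (hl₁c : ContinuousOn l₁ (Set.Icc t₀ T)) (hl₂c : ContinuousOn l₂ (Set.Icc t₀ T))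
    (hU₁c : ContinuousOn U₁ (Set.Icc t₀ T)) (hU₂c : ContinuousOn U₂ (Set.Icc t₀ T))
    (hl₁ : ∀ t ∈ Set.Icc t₀ T, 0 < l₁ t) (hl₂ : ∀ t ∈ Set.Icc t₀ T, 0 < l₂ t)
    (hsum : ∀ t ∈ Set.Icc t₀ T, l₁ t + l₂ t = 1)
    (hU : ∀ t ∈ Set.Icc t₀ T, U₁ t < U₂ t)
    (Uj lj : ℝ → ℝ) (hj : (Uj = U₁ ∧ lj = l₁) ∨ (Uj = U₂ ∧ lj = l₂))
    (x : ℝ → ℝ) (hxc : ContinuousOn x (Set.Icc t₀ T))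
    (hxne : ∀ t ∈ Set.Ico t₀ T, x t ≠ U₁ t ∧ x t ≠ U₂ t)
    (hode : ∀ t ∈ Set.Ico t₀ T,
      HasDerivWithinAt x (2 * l₁ t / (x t - U₁ t) + 2 * l₂ t / (x t - U₂ t))
        (Set.Icc t₀ T) t)
    (hxT : x T = Uj T) :
    ((4 * Real.sqrt (lj T) : ℝ) : EReal) ≤
      Filter.limsup
        (fun h : ℝ => ((|Uj T - Uj (T - h)| / Real.sqrt h : ℝ) : EReal))
        (nhdsWithin 0 (Set.Ioi 0)) := by
  rcases hj with ⟨hUj, hlj⟩ | ⟨hUj, hlj⟩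
  · rw [hUj] at hxT; rw [hUj, hlj]
    exact two_slit_core t₀ T htT l₁ l₂ U₁ U₂ hl₁c hU₁c hU₂c hl₁ hl₂ hsum hU x hxc hxne hode hxT
  · rw [hUj] at hxT; rw [hUj, hlj]
    have key := two_slit_core t₀ T htT l₂ l₁ (fun t => -U₂ t) (fun t => -U₁ t)
      hl₂c hU₂c.neg hU₁c.neg hl₂ hl₁
      (fun t ht => by rw [add_comm]; exact hsum t ht)
      (fun t ht => by show -U₂ t < -U₁ t; linarith [hU t ht])
      (fun t => -x t) hxc.neg
      (fun t ht => ⟨fun h => (hxne t ht).2 (neg_inj.mp h), fun h => (hxne t ht).1 (neg_inj.mp h)⟩)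
      (fun t ht => by
        have h : HasDerivWithinAt (fun t => -x t) _ _ _ := (hode t ht).neg
        have heq : 2 * l₂ t / (-x t - -U₂ t) + 2 * l₁ t / (-x t - -U₁ t)
            = -(2 * l₁ t / (x t - U₁ t) + 2 * l₂ t / (x t - U₂ t)) := by
          rw [show -x t - -U₂ t = -(x t - U₂ t) by ring,
            show -x t - -U₁ t = -(x t - U₁ t) by ring, div_neg, div_neg]
          ring
        simpa only [heq] using h)
      (by show -x T = -U₂ T; rw [hxT])
    have heq : (fun h : ℝ => ((|U₂ T - U₂ (T - h)| / Real.sqrt h : ℝ) : EReal))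
        = fun h : ℝ => ((|(fun t => -U₂ t) T - (fun t => -U₂ t) (T - h)| / Real.sqrt h : ℝ) : EReal) := by
      funext h
      congr 2
      simp only
      rw [show -U₂ T - -U₂ (T - h) = -(U₂ T - U₂ (T - h)) by ring, abs_neg]
    rw [heq]
    exact key

end
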